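/- Let k ≥ 1 and n ≥ 0. Substituting t_j = (−1)^{j−1}·e_j(x₁,…,x_k) (where e_j is the j-th elementary symmetric polynomial in variables x₁,…,x_k) into the generalized Fibonacci polynomial F_{k,n}(t₁,…,t_k) yields the complete homogeneous symmetric polynomial h_n(x₁,…,x_k) of degree n. That is, the GFPs are the complete homogeneous symmetric polynomials written on the elementary symmetric polynomial basis. -/

import Mathlib

open Finset MvPolynomial

/-- The set of partitions `α ⊢ n` with parts at most `k`, encoded as tuples
`α = (α₁, …, α_k) ∈ ℕ^k` (0-indexed) with `∑ j, (j+1)·α_j = n`. -/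
def partitions (k n : ℕ) : Finset (Fin k → ℕ) :=
  (Fintype.piFinset fun _ : Fin k => Finset.range (n + 1)).filter
    fun α => ∑ j : Fin k, (j.1 + 1) * α j = n

/-- The generalized Fibonacci polynomial
`F_{k,n} = ∑_{α ⊢ n} (|α|!/(α₁!⋯α_k!))·t^α` in `ℤ[t₁,…,t_k]`, with `F_{k,0} = 1`. -/
noncomputable def F (k n : ℕ) : MvPolynomial (Fin k) ℤ :=
  ∑ α ∈ partitions k n,
    (Nat.multinomial Finset.univ α : MvPolynomial (Fin k) ℤ) * ∏ j, X j ^ α j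

section Aux

open Nat

set_option linter.unusedSectionVars false

variable {R : Type*} [CommRing R] {σ : Type*} [Fintype σ] [DecidableEq σ]


lemma geom_inv (r : R) : (1 - PowerSeries.C r * PowerSeries.X) * PowerSeries.mk (fun n => r ^ n) = 1 := by
  ext n
  rcases n with _ | n
  · simp [PowerSeries.coeff_zero_eq_constantCoeff_apply]
  · rw [sub_mul, one_mul, mul_assoc, map_sub, PowerSeries.coeff_C_mul, PowerSeries.coeff_succ_X_mul, PowerSeries.coeff_mk, PowerSeries.coeff_mk,
      _root_.pow_succ', PowerSeries.coeff_one]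
    simp

lemma hsymm_eq_sum (n : ℕ) :
    MvPolynomial.hsymm σ R n = ∑ l ∈ finsuppAntidiag (univ : Finset σ) n,
      ∏ i, MvPolynomial.X i ^ l i := by
  rw [MvPolynomial.hsymm]
  refine Finset.sum_bij' (fun s _ => Multiset.toFinsupp s.1)
    (fun l hl => Sym.mk l.toMultiset ?_) (fun s _ => ?_) (fun l hl => mem_univ _)
    (fun s _ => ?_) (fun l hl => ?_) (fun s _ => ?_)
  · rw [mem_finsuppAntidiag] at hl
    simp [Finsupp.card_toMultiset, ← hl.1, Finsupp.sum_fintype]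
  · rw [mem_finsuppAntidiag]
    refine ⟨?_, subset_univ _⟩
    have : ∑ i : σ, Multiset.count i s.1 = Multiset.card s.1 := by
      rw [← Finset.sum_subset (subset_univ s.1.toFinset)
        (fun i _ hi => Multiset.count_eq_zero_of_notMem (by simpa using hi))]
      exact s.1.toFinset_sum_count_eq
    rw [Finset.sum_congr rfl (fun i _ => Multiset.toFinsupp_apply s.1 i), this]
    exact s.2
  · exact Subtype.ext (by simp)
  · simp
  · rw [Finset.prod_multiset_map_count]
    rw [← Finset.prod_subset (subset_univ s.1.toFinset)]
    · simp
    · intro i _ hi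
      simp only [Multiset.toFinsupp_apply]
      rw [Multiset.count_eq_zero_of_notMem (by simpa using hi), pow_zero]

lemma coeff_geom_prod (x : σ → R) (n : ℕ) :
    PowerSeries.coeff n (∏ i : σ, PowerSeries.mk fun m => x i ^ m) =
      ∑ l ∈ finsuppAntidiag (univ : Finset σ) n, ∏ i, x i ^ l i := by
  rw [PowerSeries.coeff_prod]
  simp [PowerSeries.coeff_mk]

lemma coeff_prod_one_sub (x : σ → R) (s : Finset σ) (n : ℕ) :
    PowerSeries.coeff n (∏ i ∈ s, (1 - PowerSeries.C (x i) * PowerSeries.X)) =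
      (-1) ^ n * ∑ A ∈ powersetCard n s, ∏ i ∈ A, x i := by
  induction s using Finset.cons_induction generalizing n with
  | empty =>
    rcases n with _ | n
    · simp
    · rw [Finset.powersetCard_eq_empty.mpr (by simp)]
      simp [PowerSeries.coeff_one]
  | cons a s ha ih =>
    have hnotmem : ∀ A ∈ powersetCard n s, a ∉ A := fun A hA h =>
      ha ((Finset.mem_powersetCard.mp hA).1 h)
    rw [Finset.prod_cons]
    rcases n with _ | n
    · simp only [pow_zero, one_mul, powersetCard_zero]
      rw [PowerSeries.coeff_zero_eq_constantCoeff_apply, map_mul]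
      simp only [map_sub, map_one, map_mul, PowerSeries.constantCoeff_X, mul_zero, sub_zero, one_mul]
      rw [← PowerSeries.coeff_zero_eq_constantCoeff_apply, ih 0]
      simp
    · have hnotmem' : ∀ A ∈ powersetCard (n + 1) s, a ∉ A := fun A hA h =>
        ha ((Finset.mem_powersetCard.mp hA).1 h)
      have hdisj : Disjoint (powersetCard (n + 1) s)
          ((powersetCard n s).image (insert a)) := by
        rw [Finset.disjoint_left]
        rintro A hA hA'
        obtain ⟨B, hB, rfl⟩ := Finset.mem_image.mp hA'
        exact hnotmem' _ hA (Finset.mem_insert_self a B)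
      have hnm : ∀ A ∈ powersetCard n s, a ∉ A := fun A hA h =>
        ha ((Finset.mem_powersetCard.mp hA).1 h)
      have hinj : Set.InjOn (insert a) ((powersetCard n s : Finset (Finset σ)) : Set (Finset σ)) := by
        intro A hA B hB h
        rw [← Finset.erase_insert (hnm A (Finset.mem_coe.mp hA)), h,
          Finset.erase_insert (hnm B (Finset.mem_coe.mp hB))]
      rw [sub_mul, one_mul, mul_assoc, map_sub, PowerSeries.coeff_C_mul, PowerSeries.coeff_succ_X_mul, ih, ih,
        Finset.cons_eq_insert, powersetCard_succ_insert ha, Finset.sum_union hdisj,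
        Finset.sum_image hinj]
      have : ∀ A ∈ powersetCard n s, ∏ i ∈ insert a A, x i = x a * ∏ i ∈ A, x i :=
        fun A hA => Finset.prod_insert (hnm A hA)
      rw [Finset.sum_congr rfl this, ← Finset.mul_sum]
      ring

lemma alternating_esymm_hsymm (n : ℕ) (hn : n ≠ 0) :
    ∑ ab ∈ Finset.HasAntidiagonal.antidiagonal n,
      (-1 : MvPolynomial σ R) ^ ab.1 * MvPolynomial.esymm σ R ab.1 *
        MvPolynomial.hsymm σ R ab.2 = 0 := by
  have h1 : (∏ i : σ, ((1 : PowerSeries (MvPolynomial σ R)) - PowerSeries.C (MvPolynomial.X i) * PowerSeries.X)) *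
      (∏ i : σ, PowerSeries.mk fun m => (MvPolynomial.X i : MvPolynomial σ R) ^ m) = 1 := by
    rw [← Finset.prod_mul_distrib]
    simp [geom_inv]
  have h2 := congrArg (PowerSeries.coeff n) h1
  rw [PowerSeries.coeff_mul, PowerSeries.coeff_one, if_neg hn] at h2
  rw [← h2]
  refine Finset.sum_congr rfl fun ab _ => ?_
  rw [coeff_prod_one_sub, coeff_geom_prod, ← hsymm_eq_sum, MvPolynomial.esymm, mul_assoc]

lemma esymm_eq_zero_of_card_lt (m : ℕ) (hm : Fintype.card σ < m) :
    MvPolynomial.esymm σ R m = 0 := by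
  rw [MvPolynomial.esymm, Finset.powersetCard_eq_empty.mpr (by simpa using hm), Finset.sum_empty]

lemma hsymm_rec (k n : ℕ) (hn : n ≠ 0) :
    MvPolynomial.hsymm (Fin k) ℤ n =
      ∑ j : Fin k, if j.1 + 1 ≤ n then
        ((-1 : MvPolynomial (Fin k) ℤ) ^ j.1 * MvPolynomial.esymm (Fin k) ℤ (j.1 + 1)) *
          MvPolynomial.hsymm (Fin k) ℤ (n - (j.1 + 1)) else 0 := by
  set g : ℕ → MvPolynomial (Fin k) ℤ := fun j =>
    ((-1 : MvPolynomial (Fin k) ℤ) ^ j * MvPolynomial.esymm (Fin k) ℤ (j + 1)) *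
      MvPolynomial.hsymm (Fin k) ℤ (n - (j + 1)) with hg
  have h0 := alternating_esymm_hsymm (σ := Fin k) (R := ℤ) n hn
  rw [Finset.Nat.sum_antidiagonal_eq_sum_range_succ_mk] at h0
  rw [Finset.sum_range_succ'] at h0
  simp only [pow_zero, one_mul, Nat.sub_zero, MvPolynomial.esymm_zero] at h0
  have key : MvPolynomial.hsymm (Fin k) ℤ n = ∑ j ∈ Finset.range n, g j := by
    have : ∀ j ∈ Finset.range n, g j = -((-1) ^ (j + 1) *
        MvPolynomial.esymm (Fin k) ℤ (j + 1) * MvPolynomial.hsymm (Fin k) ℤ (n - (j + 1))) := by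
      intro j _
      rw [hg]
      ring
    rw [Finset.sum_congr rfl this, Finset.sum_neg_distrib]
    linear_combination h0
  have ext1 : ∑ j ∈ Finset.range n, g j =
      ∑ j ∈ Finset.range (n + k), if j + 1 ≤ n then g j else 0 := by
    rw [Finset.sum_congr rfl (fun j hj => (if_pos (Finset.mem_range.mp hj)).symm)]
    exact Finset.sum_subset (Finset.range_subset_range.mpr (Nat.le_add_right n k))
      fun j _ hj => if_neg (by simp at hj ⊢; omega)
  have ext2 : (∑ j : Fin k, if j.1 + 1 ≤ n then g j.1 else 0) =
      ∑ j ∈ Finset.range (n + k), if j + 1 ≤ n then g j else 0 := by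
    rw [Fin.sum_univ_eq_sum_range (fun j => if j + 1 ≤ n then g j else 0)]
    refine Finset.sum_subset (Finset.range_subset_range.mpr (Nat.le_add_left k n)) fun j hj hj' => ?_
    have hjk : k ≤ j := by simp at hj'; omega
    have : MvPolynomial.esymm (Fin k) ℤ (j + 1) = 0 :=
      esymm_eq_zero_of_card_lt _ (by simp; omega)
    simp [hg, this]
  rw [key, ext1, ← ext2]

lemma mem_partitions {k n : ℕ} (α : Fin k → ℕ) :
    α ∈ partitions k n ↔ ∑ j : Fin k, (j.1 + 1) * α j = n := by
  constructor
  · exact fun h => (Finset.mem_filter.mp h).2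
  · intro h
    refine Finset.mem_filter.mpr ⟨Fintype.mem_piFinset.mpr fun i => Finset.mem_range.mpr ?_, h⟩
    have h1 : (i.1 + 1) * α i ≤ n := by
      rw [← h]
      exact Finset.single_le_sum (f := fun j : Fin k => (j.1 + 1) * α j)
        (fun _ _ => Nat.zero_le _) (mem_univ i)
    have h2 : α i ≤ (i.1 + 1) * α i := Nat.le_mul_of_pos_left _ (Nat.succ_pos _)
    omega

lemma multinomial_rec {k : ℕ} (f : Fin k → ℕ) (hf : 0 < ∑ i, f i) :
    Nat.multinomial Finset.univ f =
      ∑ j : Fin k, if 0 < f j then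
        Nat.multinomial Finset.univ (Function.update f j (f j - 1)) else 0 := by
  set N := ∑ i, f i with hN
  set P := ∏ i, (f i)! with hP
  have hPpos : 0 < P := Finset.prod_pos fun i _ => (f i).factorial_pos
  refine Nat.eq_of_mul_eq_mul_left hPpos ?_
  rw [Nat.multinomial_spec, Finset.mul_sum]
  have term : ∀ j : Fin k, (P * if 0 < f j then
      Nat.multinomial Finset.univ (Function.update f j (f j - 1)) else 0) = f j * (N - 1)! := by
    intro j
    rcases Nat.eq_zero_or_pos (f j) with h | h
    · simp [h]
    rw [if_pos h]
    set g := Function.update f j (f j - 1) with hgdef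
    have hfact : (f j)! = f j * (f j - 1)! := by
      conv_lhs => rw [← Nat.succ_pred_eq_of_pos h]
      rw [Nat.factorial_succ, Nat.pred_eq_sub_one]
      congr 1
      omega
    have hup : (fun i => (g i)!) = Function.update (fun i => (f i)!) j ((f j - 1)!) := by
      funext i
      rcases eq_or_ne i j with rfl | hij
      · simp [hgdef]
      · simp [hgdef, Function.update_of_ne hij]
    have hsplit : P = f j * ∏ i, (g i)! := by
      calc P = (f j)! * ∏ x ∈ univ.erase j, (f x)! :=
            (Finset.mul_prod_erase univ _ (mem_univ j)).symm
        _ = f j * ((f j - 1)! * ∏ x ∈ univ.erase j, (f x)!) := by rw [hfact, mul_assoc]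
        _ = f j * ∏ i, (g i)! := by
            rw [hup, Finset.prod_update_of_mem (mem_univ j), Finset.sdiff_singleton_eq_erase]
    have hgsum : ∑ i, g i = N - 1 := by
      rw [hgdef, Finset.sum_update_of_mem (mem_univ j), Finset.sdiff_singleton_eq_erase, hN,
        ← Finset.add_sum_erase univ f (mem_univ j)]
      omega
    rw [hsplit, mul_assoc, Nat.multinomial_spec, hgsum]
  rw [Finset.sum_congr rfl fun j _ => term j, ← Finset.sum_mul]
  rw [← hN, ← Nat.succ_pred_eq_of_pos hf, Nat.factorial_succ]
  congr 1 <;> omega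

lemma sum_upd {k : ℕ} (j : Fin k) (α : Fin k → ℕ) (b : ℕ) :
    ∑ i : Fin k, (i.1 + 1) * Function.update α j b i
      = (j.1 + 1) * b + ∑ i ∈ univ.erase j, (i.1 + 1) * α i := by
  calc ∑ i : Fin k, (i.1 + 1) * Function.update α j b i
      = ∑ i : Fin k, Function.update (fun i : Fin k => (i.1 + 1) * α i) j ((j.1 + 1) * b) i := by
        refine Finset.sum_congr rfl fun i _ => ?_
        rcases eq_or_ne i j with rfl | hij
        · simp
        · simp [Function.update_of_ne hij]
    _ = _ := by
        rw [Finset.sum_update_of_mem (mem_univ j), Finset.sdiff_singleton_eq_erase]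

lemma prod_X_upd {k : ℕ} (j : Fin k) (α : Fin k → ℕ) (b : ℕ) :
    (∏ i, (X i : MvPolynomial (Fin k) ℤ) ^ Function.update α j b i)
      = X j ^ b * ∏ i ∈ univ.erase j, X i ^ α i := by
  calc (∏ i, (X i : MvPolynomial (Fin k) ℤ) ^ Function.update α j b i)
      = ∏ i : Fin k, Function.update (fun i : Fin k => (X i : MvPolynomial (Fin k) ℤ) ^ α i) j
          (X j ^ b) i := by
        refine Finset.prod_congr rfl fun i _ => ?_
        rcases eq_or_ne i j with rfl | hij
        · simp
        · simp [Function.update_of_ne hij]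
    _ = _ := by
        rw [Finset.prod_update_of_mem (mem_univ j), Finset.sdiff_singleton_eq_erase]

lemma F_rec (k n : ℕ) (hn : n ≠ 0) :
    F k n = ∑ j : Fin k, if j.1 + 1 ≤ n then X j * F k (n - (j.1 + 1)) else 0 := by
  have hpos : ∀ α ∈ partitions k n, 0 < ∑ i, α i := by
    intro α hα
    rw [mem_partitions] at hα
    rcases Nat.eq_zero_or_pos (∑ i, α i) with h | h
    · rw [Finset.sum_eq_zero_iff] at h
      rw [Finset.sum_congr rfl (fun i _ => by rw [h i (mem_univ i), Nat.mul_zero])] at hα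
      simp at hα
      omega
    · exact h
  calc F k n
      = ∑ α ∈ partitions k n, ∑ j : Fin k, (if 0 < α j then
          (Nat.multinomial univ (Function.update α j (α j - 1)) : MvPolynomial (Fin k) ℤ)
          else 0) * ∏ i, X i ^ α i := by
        refine Finset.sum_congr rfl fun α hα => ?_
        rw [multinomial_rec α (hpos α hα)]
        push_cast
        rw [Finset.sum_mul]
    _ = ∑ j : Fin k, ∑ α ∈ partitions k n, (if 0 < α j then
          (Nat.multinomial univ (Function.update α j (α j - 1)) : MvPolynomial (Fin k) ℤ)
            * ∏ i, X i ^ α i else 0) := by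
        rw [Finset.sum_comm]
        exact Finset.sum_congr rfl fun j _ => Finset.sum_congr rfl fun α _ => by
          rw [ite_mul, zero_mul]
    _ = ∑ j : Fin k, if j.1 + 1 ≤ n then X j * F k (n - (j.1 + 1)) else 0 := by
        refine Finset.sum_congr rfl fun j _ => ?_
        rw [← Finset.sum_filter]
        by_cases hj : j.1 + 1 ≤ n
        · rw [if_pos hj, F, Finset.mul_sum]
          refine Finset.sum_bij' (fun α _ => Function.update α j (α j - 1))
            (fun β _ => Function.update β j (β j + 1)) ?_ ?_ ?_ ?_ ?_
          · intro α hα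
            obtain ⟨hα, hposj⟩ := Finset.mem_filter.mp hα
            rw [mem_partitions] at hα ⊢
            rw [sum_upd]
            have hsplit := Finset.add_sum_erase univ (fun i : Fin k => (i.1 + 1) * α i) (mem_univ j)
            have hmul : (j.1 + 1) * (α j - 1) = (j.1 + 1) * α j - (j.1 + 1) := by
              rw [Nat.mul_sub, Nat.mul_one]
            have hle : j.1 + 1 ≤ (j.1 + 1) * α j := Nat.le_mul_of_pos_right _ hposj
            omega
          · intro β hβ
            rw [mem_partitions] at hβ
            refine Finset.mem_filter.mpr ⟨(mem_partitions _).mpr ?_, by simp⟩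
            rw [sum_upd]
            have hsplit := Finset.add_sum_erase univ (fun i : Fin k => (i.1 + 1) * β i) (mem_univ j)
            have hmul : (j.1 + 1) * (β j + 1) = (j.1 + 1) * β j + (j.1 + 1) := by ring
            omega
          · intro α hα
            have hposj := (Finset.mem_filter.mp hα).2
            simp only [Function.update_idem, Function.update_self]
            rw [Nat.sub_add_cancel hposj, Function.update_eq_self]
          · intro β hβ
            simp only [Function.update_idem, Function.update_self]
            rw [Nat.add_sub_cancel, Function.update_eq_self]
          · intro α hα
            have hposj := (Finset.mem_filter.mp hα).2
            rw [prod_X_upd]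
            have hXpow : (X j : MvPolynomial (Fin k) ℤ) ^ α j = X j * X j ^ (α j - 1) := by
              conv_lhs => rw [show α j = (α j - 1) + 1 by omega]
              rw [_root_.pow_succ']
            rw [← Finset.mul_prod_erase univ (fun i : Fin k => (X i : MvPolynomial (Fin k) ℤ) ^ α i)
              (mem_univ j)]
            rw [hXpow]
            ring
        · rw [if_neg hj]
          rw [Finset.filter_eq_empty_iff.mpr, Finset.sum_empty]
          intro α hα
          rw [mem_partitions] at hα
          intro hposj
          have hle : (j.1 + 1) * α j ≤ n := by
            rw [← hα]
            exact Finset.single_le_sum (f := fun i : Fin k => (i.1 + 1) * α i)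
              (fun _ _ => Nat.zero_le _) (mem_univ j)
          have : j.1 + 1 ≤ (j.1 + 1) * α j := Nat.le_mul_of_pos_right _ hposj
          omega

lemma F_zero (k : ℕ) : F k 0 = 1 := by
  have h : partitions k 0 = {fun _ => 0} := by
    ext α
    rw [mem_partitions, Finset.mem_singleton]
    constructor
    · intro h
      funext i
      have h2 := Finset.sum_eq_zero_iff.mp h i (mem_univ i)
      simpa using h2
    · rintro rfl
      simp
  rw [F, h, Finset.sum_singleton]
  simp [Nat.multinomial]

end Aux

theorem F_eq_complete_homogeneous (k n : ℕ) (hk : 1 ≤ k) :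
    aeval (fun j : Fin k => (-1 : MvPolynomial (Fin k) ℤ) ^ j.1 * esymm (Fin k) ℤ (j.1 + 1))
        (F k n) =
      hsymm (Fin k) ℤ n := by
  induction n using Nat.strong_induction_on with
  | _ n ih =>
    rcases Nat.eq_zero_or_pos n with rfl | hn
    · rw [F_zero]
      simp
    · rw [F_rec k n (by omega), map_sum, hsymm_rec k n (by omega)]
      refine Finset.sum_congr rfl fun j _ => ?_
      by_cases hj : j.1 + 1 ≤ n
      · rw [if_pos hj, if_pos hj, map_mul, aeval_X, ih _ (by omega)]
      · rw [if_neg hj, if_neg hj, map_zero]
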